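/- Let p be a prime and let R be a (not necessarily unital) ring such that the additive quotient group R/Z(R) is isomorphic (as an additive group) to ℤ_p × ℤ_p. Then |Cent(R)| = p + 2. -/
import Mathlib


/-- The centralizer of `r` in a (not necessarily unital) ring: `{s | r*s = s*r}`. -/
def rCentralizer {R : Type*} [NonUnitalRing R] (r : R) : Set R := {s | r * s = s * r}

/-- The set of all centralizers of elements of `R`. -/
def Cent (R : Type*) [NonUnitalRing R] : Set (Set R) :=
  Set.range (fun r : R => rCentralizer r)

/-- The center of a (not necessarily unital) ring, as a set. -/
def rCenter (R : Type*) [NonUnitalRing R] : Set R := {s | ∀ r : R, r * s = s * r}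

/-- The center of a (not necessarily unital) ring, as an additive subgroup. -/
def centerAddSubgroup (R : Type*) [NonUnitalRing R] : AddSubgroup R where
  carrier := {s | ∀ r : R, r * s = s * r}
  zero_mem' := by intro r; rw [mul_zero, zero_mul]
  add_mem' := by intro a b ha hb r; rw [mul_add, add_mul, ha r, hb r]
  neg_mem' := by intro a ha r; rw [mul_neg, neg_mul, ha r]

section Aux

variable {p : ℕ} [Fact p.Prime]

/-- membership in zmultiples via `ZMod p` scalars -/
lemma mem_zmultiples_iff_smul (v x : ZMod p × ZMod p) :
    x ∈ AddSubgroup.zmultiples v ↔ ∃ c : ZMod p, c • v = x := by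
  rw [AddSubgroup.mem_zmultiples_iff]
  constructor
  · rintro ⟨n, rfl⟩
    exact ⟨(n : ZMod p), by push_cast [Prod.smul_def]; simp [zsmul_eq_mul, Prod.ext_iff]⟩
  · rintro ⟨c, rfl⟩
    refine ⟨(c.val : ℤ), ?_⟩
    have : ((c.val : ℤ) : ZMod p) = c := by
      push_cast
      simp [ZMod.natCast_val, ZMod.cast_id]
    simp [Prod.smul_def, Prod.ext_iff, zsmul_eq_mul, this]

lemma zmultiples_smul_eq (c : ZMod p) (hc : c ≠ 0) (v : ZMod p × ZMod p) :
    AddSubgroup.zmultiples (c • v) = AddSubgroup.zmultiples v := by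
  apply le_antisymm
  · rw [AddSubgroup.zmultiples_le, mem_zmultiples_iff_smul]
    exact ⟨c, rfl⟩
  · rw [AddSubgroup.zmultiples_le, mem_zmultiples_iff_smul]
    exact ⟨c⁻¹, by rw [smul_smul, inv_mul_cancel₀ hc, one_smul]⟩

/-- the lines in `(ZMod p)²`, parametrized by `Option (ZMod p)` -/
def lineGen : Option (ZMod p) → ZMod p × ZMod p
  | none => (0, 1)
  | some a => (1, a)

lemma lineGen_ne_zero (o : Option (ZMod p)) : lineGen o ≠ 0 := by
  cases o <;> simp [lineGen, Prod.ext_iff]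

lemma exists_lineGen (v : ZMod p × ZMod p) (hv : v ≠ 0) :
    ∃ o : Option (ZMod p), AddSubgroup.zmultiples v = AddSubgroup.zmultiples (lineGen o) := by
  by_cases h1 : v.1 = 0
  · refine ⟨none, ?_⟩
    have h2 : v.2 ≠ 0 := fun h2 => hv (Prod.ext h1 h2)
    have : v = v.2 • (lineGen none : ZMod p × ZMod p) := by
      simp [lineGen, Prod.ext_iff, h1]
    rw [this, zmultiples_smul_eq _ h2]
  · refine ⟨some (v.1⁻¹ * v.2), ?_⟩
    have hv1 : v = v.1 • (lineGen (some (v.1⁻¹ * v.2)) : ZMod p × ZMod p) := by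
      simp [lineGen, Prod.ext_iff, smul_eq_mul, ← mul_assoc, mul_inv_cancel₀ h1]
    conv_lhs => rw [hv1]
    rw [zmultiples_smul_eq _ h1]

lemma lineGen_inj : Function.Injective
    (fun o : Option (ZMod p) => AddSubgroup.zmultiples (lineGen o)) := by
  intro o₁ o₂ h
  have h' : AddSubgroup.zmultiples (lineGen o₁) = AddSubgroup.zmultiples (lineGen o₂) := h
  have hmem : (lineGen o₁ : ZMod p × ZMod p) ∈ AddSubgroup.zmultiples (lineGen o₂) := by
    rw [← h']; exact AddSubgroup.mem_zmultiples _
  rw [mem_zmultiples_iff_smul] at hmem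
  obtain ⟨c, hc⟩ := hmem
  cases o₁ with
  | none => cases o₂ with
    | none => rfl
    | some b =>
      simp [lineGen, Prod.ext_iff] at hc
      obtain ⟨h1, h2⟩ := hc
      subst h1
      simp at h2
  | some a => cases o₂ with
    | none =>
      simp [lineGen, Prod.ext_iff] at hc
    | some b =>
      simp [lineGen, Prod.ext_iff] at hc
      obtain ⟨rfl, h2⟩ := hc
      rw [one_mul] at h2
      rw [h2]

lemma card_V : Nat.card (ZMod p × ZMod p) = p * p := by
  simp [Nat.card_prod, Nat.card_zmod]

lemma card_zmultiples_eq (v : ZMod p × ZMod p) (hv : v ≠ 0) :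
    Nat.card (AddSubgroup.zmultiples v) = p := by
  rw [Nat.card_zmultiples]
  have hdvd : addOrderOf v ∣ p := by
    apply addOrderOf_dvd_of_nsmul_eq_zero
    have : ∀ x : ZMod p, p • x = 0 := by
      intro x; rw [nsmul_eq_mul, ZMod.natCast_self, zero_mul]
    simp [Prod.smul_def, Prod.ext_iff, this]
  rcases (Nat.Prime.eq_one_or_self_of_dvd Fact.out _ hdvd) with h | h
  · exact absurd (AddMonoid.addOrderOf_eq_one_iff.mp h) hv
  · exact h

lemma eq_zmultiples_of_le {v : ZMod p × ZMod p} (hv : v ≠ 0)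
    {H : AddSubgroup (ZMod p × ZMod p)} (hle : AddSubgroup.zmultiples v ≤ H)
    (hne : H ≠ ⊤) : H = AddSubgroup.zmultiples v := by
  have hcard : Nat.card H ∣ p * p := by
    rw [← card_V]; exact AddSubgroup.card_addSubgroup_dvd_card H
  have hp : p.Prime := Fact.out
  have hdvd : p ∣ Nat.card H := by
    have := AddSubgroup.card_dvd_of_le hle
    rwa [card_zmultiples_eq v hv] at this
  -- Nat.card H = p or p * p
  have : Nat.card H = p ∨ Nat.card H = p * p := by
    obtain ⟨k, hk⟩ := hdvd
    rw [hk] at hcard ⊢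
    have hk' : k ∣ p := (Nat.mul_dvd_mul_iff_left hp.pos).mp hcard
    rcases hp.eq_one_or_self_of_dvd _ hk' with h | h <;> simp [h]
  rcases this with h | h
  · symm
    apply AddSubgroup.eq_of_le_of_card_ge hle
    rw [h, card_zmultiples_eq v hv]
  · exfalso
    apply hne
    apply AddSubgroup.eq_top_of_card_eq
    rw [h, card_V]

end Aux


lemma lineGen_zmultiples_ne_top {p : ℕ} [Fact p.Prime] (o : Option (ZMod p)) :
    AddSubgroup.zmultiples (lineGen o) ≠ ⊤ := by
  intro htop
  have h1 := card_zmultiples_eq (lineGen o) (lineGen_ne_zero o)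
  rw [htop] at h1
  rw [AddSubgroup.card_top, card_V] at h1
  have h2 : 2 ≤ p := (Fact.out : p.Prime).two_le
  nlinarith

section Main

variable {R : Type*} [NonUnitalRing R]

/-- the centralizer as an additive subgroup -/
def centAdd (r : R) : AddSubgroup R where
  carrier := rCentralizer r
  zero_mem' := by simp [rCentralizer]
  add_mem' := by
    intro a b ha hb
    simp only [rCentralizer, Set.mem_setOf_eq] at *
    rw [mul_add, add_mul, ha, hb]
  neg_mem' := by
    intro a ha
    simp only [rCentralizer, Set.mem_setOf_eq] at *
    rw [mul_neg, neg_mul, ha]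

lemma center_le_centAdd (r : R) : centerAddSubgroup R ≤ centAdd r := fun _ hs => hs r

lemma centAdd_eq_top_iff (r : R) : centAdd r = ⊤ ↔ r ∈ centerAddSubgroup R := by
  constructor
  · intro h t
    have ht : t ∈ centAdd r := h ▸ AddSubgroup.mem_top t
    exact ht.symm
  · intro h
    ext t
    simp only [AddSubgroup.mem_top, iff_true]
    exact (h t).symm

lemma centralizer_eq_of_not_center {p : ℕ} [Fact p.Prime] (φ : R →+ ZMod p × ZMod p)
    (hker : ∀ x : R, φ x = 0 ↔ x ∈ centerAddSubgroup R)
    (r : R) (hr : r ∉ centerAddSubgroup R) :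
    rCentralizer r = φ ⁻¹' (AddSubgroup.zmultiples (φ r)) := by
  set K := AddSubgroup.map φ (centAdd r) with hK
  have h1 : AddSubgroup.comap φ K = centAdd r := by
    rw [hK, AddSubgroup.comap_map_eq, sup_eq_left]
    intro x hx
    exact center_le_centAdd r ((hker x).mp hx)
  have hKne : K ≠ ⊤ := by
    intro hKtop
    apply hr
    rw [← centAdd_eq_top_iff, ← h1, hKtop, AddSubgroup.comap_top]
  have hle : AddSubgroup.zmultiples (φ r) ≤ K := by
    rw [AddSubgroup.zmultiples_le]
    exact ⟨r, rfl, rfl⟩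
  have hφr : φ r ≠ 0 := fun h0 => hr ((hker r).mp h0)
  have hKeq : K = AddSubgroup.zmultiples (φ r) := eq_zmultiples_of_le hφr hle hKne
  have : rCentralizer r = (AddSubgroup.comap φ K : Set R) := by rw [h1]; rfl
  rw [this, hKeq]
  rfl

lemma centralizer_eq_univ_of_center (r : R) (hr : r ∈ centerAddSubgroup R) :
    rCentralizer r = Set.univ := by
  ext s
  simp only [Set.mem_univ, iff_true, rCentralizer, Set.mem_setOf_eq]
  exact (hr s).symm

end Main

/-- If `R/Z(R) ≅ ℤ_p × ℤ_p` (as additive groups), then `|Cent(R)| = p + 2`. -/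
theorem cent_of_quotient_center (p : ℕ) (hp : p.Prime) (R : Type*) [NonUnitalRing R]
    (h : Nonempty ((R ⧸ centerAddSubgroup R) ≃+ (ZMod p × ZMod p))) :
    (Cent R).ncard = p + 2 := by
  haveI : Fact p.Prime := ⟨hp⟩
  obtain ⟨e⟩ := h
  let φ : R →+ ZMod p × ZMod p :=
    e.toAddMonoidHom.comp (QuotientAddGroup.mk' (centerAddSubgroup R))
  have hφsurj : Function.Surjective φ :=
    e.surjective.comp (QuotientAddGroup.mk'_surjective (centerAddSubgroup R))
  have hker : ∀ x : R, φ x = 0 ↔ x ∈ centerAddSubgroup R := by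
    intro x
    show e (QuotientAddGroup.mk' (centerAddSubgroup R) x) = 0 ↔ _
    rw [EmbeddingLike.map_eq_zero_iff, QuotientAddGroup.mk'_apply,
      QuotientAddGroup.eq_zero_iff]
  set F : Option (Option (ZMod p)) → Set R := fun o =>
    Option.elim o Set.univ (fun o' => φ ⁻¹' (AddSubgroup.zmultiples (lineGen o'))) with hF
  have hrange : Cent R = Set.range F := by
    ext S
    constructor
    · rintro ⟨r, rfl⟩
      by_cases hr : r ∈ centerAddSubgroup R
      · exact ⟨none, (centralizer_eq_univ_of_center r hr).symm⟩
      · have hφr : φ r ≠ 0 := fun h0 => hr ((hker r).mp h0)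
        obtain ⟨o, ho⟩ := exists_lineGen (φ r) hφr
        refine ⟨some o, ?_⟩
        show φ ⁻¹' (AddSubgroup.zmultiples (lineGen o)) = rCentralizer r
        rw [centralizer_eq_of_not_center φ hker r hr, ho]
    · rintro ⟨o, rfl⟩
      cases o with
      | none =>
        refine ⟨0, ?_⟩
        show rCentralizer (0 : R) = Set.univ
        ext s
        simp [rCentralizer]
      | some o' =>
        obtain ⟨r, hrval⟩ := hφsurj (lineGen o')
        have hr : r ∉ centerAddSubgroup R := by
          intro hmem
          exact lineGen_ne_zero o' (hrval ▸ (hker r).mpr hmem)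
        refine ⟨r, ?_⟩
        show rCentralizer r = φ ⁻¹' (AddSubgroup.zmultiples (lineGen o'))
        rw [centralizer_eq_of_not_center φ hker r hr, hrval]
  have hFinj : Function.Injective F := by
    have hpre : ∀ o' : Option (ZMod p), F (some o') ≠ Set.univ := by
      intro o' hEq
      apply lineGen_zmultiples_ne_top o'
      rw [eq_top_iff]
      intro v _
      obtain ⟨x, rfl⟩ := hφsurj v
      have : x ∈ φ ⁻¹' (AddSubgroup.zmultiples (lineGen o')) := by
        rw [show φ ⁻¹' ↑(AddSubgroup.zmultiples (lineGen o')) = F (some o') from rfl, hEq]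
        trivial
      exact this
    intro o₁ o₂ hEq
    cases o₁ with
    | none => cases o₂ with
      | none => rfl
      | some b => exact absurd hEq.symm (hpre b)
    | some a => cases o₂ with
      | none => exact absurd hEq (hpre a)
      | some b =>
        have hsets : (AddSubgroup.zmultiples (lineGen a) : Set (ZMod p × ZMod p)) =
            (AddSubgroup.zmultiples (lineGen b) : Set (ZMod p × ZMod p)) :=
          Set.preimage_injective.mpr hφsurj hEq
        exact congrArg some (lineGen_inj (SetLike.coe_injective hsets))
  rw [hrange, ← Set.image_univ, Set.ncard_image_of_injective _ hFinj, Set.ncard_univ,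
    Nat.card_eq_fintype_card, Fintype.card_option, Fintype.card_option, ZMod.card]
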